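/- Let n ≥ 3 and let f be a fixed-point-free involution on ZMod (2n). Suppose a, a+1, b, b+1, c, c+1 are six pairwise distinct points occurring in this cyclic order, with f (a+1) = b, f (b+1) = c, f (c+1) = a, and let f' be the involution agreeing with f outside {a, a+1, b, b+1, c, c+1} and satisfying f' a = b+1, f' b = c+1, f' c = a+1. Then every chord of f whose endpoints avoid {a, a+1, b, b+1, c, c+1} has the same Gaussian parity in f as in f'. (This verifies parity axiom 4 for the Gaussian parity in the case of a third Reidemeister move: crossings not involved in the move keep their parity.) -/

import Mathlib

section Aux

lemma pair_ne' {α : Type*} {p q r s : α} (h1 : p ≠ r) (h2 : p ≠ s) :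
    ({p, q} : Set α) ≠ {r, s} := by
  intro h
  have hp : p ∈ ({r, s} : Set α) := h ▸ Set.mem_insert p {q}
  simp only [Set.mem_insert_iff, Set.mem_singleton_iff] at hp
  tauto

lemma ncard_tri {α : Type*} [Finite α] (d1 d2 d3 : α) (h12 : d1 ≠ d2) (h13 : d1 ≠ d3)
    (h23 : d2 ≠ d3) (P1 P2 P3 : Prop) :
    (Even (Set.ncard {d | (d = d1 ∧ P1) ∨ (d = d2 ∧ P2) ∨ (d = d3 ∧ P3)}) ↔
      ¬ Xor' P1 (Xor' P2 P3)) := by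
  classical
  by_cases h1 : P1 <;> by_cases h2 : P2 <;> by_cases h3 : P3
  · have hs : {d | (d = d1 ∧ P1) ∨ (d = d2 ∧ P2) ∨ (d = d3 ∧ P3)} = ({d1, d2, d3} : Set α) := by
      ext e; simp [h1, h2, h3]
    rw [hs, Set.ncard_insert_of_notMem (by simp [h12, h13]), Set.ncard_pair h23]
    simp [Xor', h1, h2, h3] <;> decide
  · have hs : {d | (d = d1 ∧ P1) ∨ (d = d2 ∧ P2) ∨ (d = d3 ∧ P3)} = ({d1, d2} : Set α) := by
      ext e; simp [h1, h2, h3]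
    rw [hs, Set.ncard_pair h12]
    simp [Xor', h1, h2, h3] <;> decide
  · have hs : {d | (d = d1 ∧ P1) ∨ (d = d2 ∧ P2) ∨ (d = d3 ∧ P3)} = ({d1, d3} : Set α) := by
      ext e; simp [h1, h2, h3]
    rw [hs, Set.ncard_pair h13]
    simp [Xor', h1, h2, h3] <;> decide
  · have hs : {d | (d = d1 ∧ P1) ∨ (d = d2 ∧ P2) ∨ (d = d3 ∧ P3)} = ({d1} : Set α) := by
      ext e; simp [h1, h2, h3]
    rw [hs, Set.ncard_singleton]
    simp [Xor', h1, h2, h3] <;> decide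
  · have hs : {d | (d = d1 ∧ P1) ∨ (d = d2 ∧ P2) ∨ (d = d3 ∧ P3)} = ({d2, d3} : Set α) := by
      ext e; simp [h1, h2, h3]
    rw [hs, Set.ncard_pair h23]
    simp [Xor', h1, h2, h3] <;> decide
  · have hs : {d | (d = d1 ∧ P1) ∨ (d = d2 ∧ P2) ∨ (d = d3 ∧ P3)} = ({d2} : Set α) := by
      ext e; simp [h1, h2, h3]
    rw [hs, Set.ncard_singleton]
    simp [Xor', h1, h2, h3] <;> decide
  · have hs : {d | (d = d1 ∧ P1) ∨ (d = d2 ∧ P2) ∨ (d = d3 ∧ P3)} = ({d3} : Set α) := by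
      ext e; simp [h1, h2, h3]
    rw [hs, Set.ncard_singleton]
    simp [Xor', h1, h2, h3] <;> decide
  · have hs : {d | (d = d1 ∧ P1) ∨ (d = d2 ∧ P2) ∨ (d = d3 ∧ P3)} = (∅ : Set α) := by
      ext e; simp [h1, h2, h3]
    rw [hs, Set.ncard_empty]
    simp [Xor', h1, h2, h3] <;> decide

lemma xor6 (P Q R S T U : Prop) :
    (¬ Xor' (Xor' Q R) (Xor' (Xor' S T) (Xor' U P))) ↔
      (¬ Xor' (Xor' P S) (Xor' (Xor' R U) (Xor' T Q))) := by
  by_cases hP : P <;> by_cases hQ : Q <;> by_cases hR : R <;> by_cases hS : S <;>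
    by_cases hT : T <;> by_cases hU : U <;> simp [Xor', hP, hQ, hR, hS, hT, hU]

end Aux


/-- The open arc from `u` to `v` on the cyclic set `ZMod N`: the points
`u+1, u+2, …, v-1` reached from `u` by repeatedly adding `1` before reaching `v`. -/
def openArc {N : ℕ} (u v : ZMod N) : Set (ZMod N) :=
  {w | 0 < (w - u).val ∧ (w - u).val < (v - u).val}

/-- For a chord diagram given by the fixed-point-free involution `f`, the chord
`{b, f b}` is linked with the chord `{a, f a}` if exactly one of `b`, `f b`
lies in the open arc from `a` to `f a`. -/
def Linked {N : ℕ} (f : ZMod N → ZMod N) (a b : ZMod N) : Prop :=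
  Xor' (b ∈ openArc a (f a)) (f b ∈ openArc a (f a))

/-- The number of chords of the chord diagram `f` linked with the chord `{a, f a}`. -/
noncomputable def linkedCount {N : ℕ} (f : ZMod N → ZMod N) (a : ZMod N) : ℕ :=
  Set.ncard {d : Set (ZMod N) | ∃ b, d = {b, f b} ∧ Linked f a b}

/-- The chord `{a, f a}` is Gaussian-even: the number of chords linked with it is even. -/
def GaussEven {N : ℕ} (f : ZMod N → ZMod N) (a : ZMod N) : Prop :=
  Even (linkedCount f a)


lemma decomp {N : ℕ} (f : ZMod N → ZMod N) (x : ZMod N) (S : Set (ZMod N))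
    (u1 v1 u2 v2 u3 v3 : ZMod N)
    (hmem : ∀ y, y ∈ S ↔ y = u1 ∨ y = v1 ∨ y = u2 ∨ y = v2 ∨ y = u3 ∨ y = v3)
    (h1 : f u1 = v1) (h1' : f v1 = u1) (h2 : f u2 = v2) (h2' : f v2 = u2)
    (h3 : f u3 = v3) (h3' : f v3 = u3) :
    {d | ∃ y, d = {y, f y} ∧ Linked f x y} =
      {d | ∃ y, y ∉ S ∧ d = {y, f y} ∧ Linked f x y} ∪
      {d : Set (ZMod N) | (d = {u1, v1} ∧ Xor' (u1 ∈ openArc x (f x)) (v1 ∈ openArc x (f x))) ∨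
           (d = {u2, v2} ∧ Xor' (u2 ∈ openArc x (f x)) (v2 ∈ openArc x (f x))) ∨
           (d = {u3, v3} ∧ Xor' (u3 ∈ openArc x (f x)) (v3 ∈ openArc x (f x)))} := by
  ext d
  simp only [Set.mem_setOf_eq, Set.mem_union]
  constructor
  · rintro ⟨y, rfl, hy⟩
    by_cases hyS : y ∈ S
    · right
      simp only [Linked] at hy
      rcases (hmem y).1 hyS with rfl | rfl | rfl | rfl | rfl | rfl
      · exact Or.inl ⟨by rw [h1], by rwa [h1] at hy⟩
      · exact Or.inl ⟨by rw [h1', Set.pair_comm], by rw [h1'] at hy; rwa [Xor', _root_.xor_comm]⟩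
      · exact Or.inr (Or.inl ⟨by rw [h2], by rwa [h2] at hy⟩)
      · exact Or.inr (Or.inl ⟨by rw [h2', Set.pair_comm], by rw [h2'] at hy; rwa [Xor', _root_.xor_comm]⟩)
      · exact Or.inr (Or.inr ⟨by rw [h3], by rwa [h3] at hy⟩)
      · exact Or.inr (Or.inr ⟨by rw [h3', Set.pair_comm], by rw [h3'] at hy; rwa [Xor', _root_.xor_comm]⟩)
    · exact Or.inl ⟨y, hyS, rfl, hy⟩
  · rintro (⟨y, _, rfl, hy⟩ | ⟨rfl, h⟩ | ⟨rfl, h⟩ | ⟨rfl, h⟩)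
    · exact ⟨y, rfl, hy⟩
    · exact ⟨u1, by rw [h1], by simpa only [Linked, h1] using h⟩
    · exact ⟨u2, by rw [h2], by simpa only [Linked, h2] using h⟩
    · exact ⟨u3, by rw [h3], by simpa only [Linked, h3] using h⟩

lemma disj' {N : ℕ} (f : ZMod N → ZMod N) (x : ZMod N) (S : Set (ZMod N))
    (u1 v1 u2 v2 u3 v3 : ZMod N)
    (hu1 : u1 ∈ S) (hv1 : v1 ∈ S) (hu2 : u2 ∈ S) (hv2 : v2 ∈ S) (hu3 : u3 ∈ S) (hv3 : v3 ∈ S)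
    (L1 L2 L3 : Prop) :
    Disjoint {d : Set (ZMod N) | ∃ y, y ∉ S ∧ d = {y, f y} ∧ Linked f x y}
      {d : Set (ZMod N) | (d = {u1, v1} ∧ L1) ∨ (d = {u2, v2} ∧ L2) ∨ (d = {u3, v3} ∧ L3)} := by
  rw [Set.disjoint_left]
  rintro d ⟨y, hyS, rfl, -⟩ (⟨h, -⟩ | ⟨h, -⟩ | ⟨h, -⟩) <;>
  · have hy : y ∈ ({y, f y} : Set (ZMod N)) := Set.mem_insert _ _
    rw [h] at hy
    simp only [Set.mem_insert_iff, Set.mem_singleton_iff] at hy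
    rcases hy with rfl | rfl <;> exact hyS (by assumption)
set_option maxHeartbeats 1000000 in
theorem third_reidemeister_preserves_other_parities (n : ℕ) (hn : 3 ≤ n)
    (f : ZMod (2 * n) → ZMod (2 * n))
    (hinv : Function.Involutive f) (hfpf : ∀ x, f x ≠ x)
    (a b c : ZMod (2 * n))
    (hcyc : 1 < (b - a).val ∧ (b - a).val < (b + 1 - a).val ∧
      (b + 1 - a).val < (c - a).val ∧ (c - a).val < (c + 1 - a).val)
    (ha : f (a + 1) = b) (hb : f (b + 1) = c) (hc : f (c + 1) = a)
    (f' : ZMod (2 * n) → ZMod (2 * n))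
    (hinv' : Function.Involutive f') (hfpf' : ∀ x, f' x ≠ x)
    (hout : ∀ x, x ∉ ({a, a + 1, b, b + 1, c, c + 1} : Set (ZMod (2 * n))) → f' x = f x)
    (ha' : f' a = b + 1) (hb' : f' b = c + 1) (hc' : f' c = a + 1) :
    ∀ x, x ∉ ({a, a + 1, b, b + 1, c, c + 1} : Set (ZMod (2 * n))) →
      f x ∉ ({a, a + 1, b, b + 1, c, c + 1} : Set (ZMod (2 * n))) →
      (GaussEven f x ↔ GaussEven f' x) := by
  intro x hx hfxS
  haveI : NeZero (2 * n) := ⟨by omega⟩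
  haveI : Fact (1 < 2 * n) := ⟨by omega⟩
  obtain ⟨hc1, hc2, hc3, hc4⟩ := hcyc
  set S : Set (ZMod (2 * n)) := {a, a + 1, b, b + 1, c, c + 1} with hSdef
  -- values of f and f' on S
  have hfb : f b = a + 1 := by have := hinv (a + 1); rwa [ha] at this
  have hfc : f c = b + 1 := by have := hinv (b + 1); rwa [hb] at this
  have hfa : f a = c + 1 := by have := hinv (c + 1); rwa [hc] at this
  have hfb1 : f' (b + 1) = a := by have := hinv' a; rwa [ha'] at this
  have hfc1 : f' (c + 1) = b := by have := hinv' b; rwa [hb'] at this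
  have hfa1 : f' (a + 1) = c := by have := hinv' c; rwa [hc'] at this
  -- distinctness of the six points
  have h0 : (a - a).val = 0 := by rw [sub_self, ZMod.val_zero]
  have hv1 : (a + 1 - a).val = 1 := by rw [add_sub_cancel_left, ZMod.val_one]
  have hne : ∀ u v : ZMod (2 * n), (u - a).val ≠ (v - a).val → u ≠ v := by
    rintro u v h rfl; exact h rfl
  have n1 : a + 1 ≠ b + 1 := hne _ _ (by omega)
  have n2 : a + 1 ≠ c := hne _ _ (by omega)
  have n3 : a + 1 ≠ c + 1 := hne _ _ (by omega)
  have n4 : a + 1 ≠ a := hne _ _ (by omega)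
  have n5 : b + 1 ≠ c + 1 := hne _ _ (by omega)
  have n6 : b + 1 ≠ a := hne _ _ (by omega)
  have n7 : a ≠ b := hne _ _ (by omega)
  have n8 : a ≠ c + 1 := hne _ _ (by omega)
  have n9 : a ≠ c := hne _ _ (by omega)
  have n10 : a ≠ a + 1 := hne _ _ (by omega)
  have n11 : b ≠ c := hne _ _ (by omega)
  have n12 : b ≠ a + 1 := hne _ _ (by omega)
  -- arcs agree
  have hfx : f' x = f x := hout x hx
  -- decompositions
  have hd : linkedCount f x =
      Set.ncard ({d : Set (ZMod (2 * n)) | ∃ y, y ∉ S ∧ d = {y, f y} ∧ Linked f x y}) +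
      Set.ncard ({d : Set (ZMod (2 * n)) |
        (d = {a + 1, b} ∧ Xor' ((a + 1) ∈ openArc x (f x)) (b ∈ openArc x (f x))) ∨
        (d = {b + 1, c} ∧ Xor' ((b + 1) ∈ openArc x (f x)) (c ∈ openArc x (f x))) ∨
        (d = {c + 1, a} ∧ Xor' ((c + 1) ∈ openArc x (f x)) (a ∈ openArc x (f x)))}) := by
    rw [linkedCount, decomp f x S (a + 1) b (b + 1) c (c + 1) a
      (by intro y; simp only [hSdef, Set.mem_insert_iff, Set.mem_singleton_iff]; tauto)
      ha hfb hb hfc hc hfa]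
    exact Set.ncard_union_eq (disj' f x S (a + 1) b (b + 1) c (c + 1) a
      (by simp [hSdef]) (by simp [hSdef]) (by simp [hSdef]) (by simp [hSdef])
      (by simp [hSdef]) (by simp [hSdef]) _ _ _) (Set.toFinite _) (Set.toFinite _)
  have hd' : linkedCount f' x =
      Set.ncard ({d : Set (ZMod (2 * n)) | ∃ y, y ∉ S ∧ d = {y, f' y} ∧ Linked f' x y}) +
      Set.ncard ({d : Set (ZMod (2 * n)) |
        (d = {a, b + 1} ∧ Xor' (a ∈ openArc x (f' x)) ((b + 1) ∈ openArc x (f' x))) ∨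
        (d = {b, c + 1} ∧ Xor' (b ∈ openArc x (f' x)) ((c + 1) ∈ openArc x (f' x))) ∨
        (d = {c, a + 1} ∧ Xor' (c ∈ openArc x (f' x)) ((a + 1) ∈ openArc x (f' x)))}) := by
    rw [linkedCount, decomp f' x S a (b + 1) b (c + 1) c (a + 1)
      (by intro y; simp only [hSdef, Set.mem_insert_iff, Set.mem_singleton_iff]; tauto)
      ha' hfb1 hb' hfc1 hc' hfa1]
    exact Set.ncard_union_eq (disj' f' x S a (b + 1) b (c + 1) c (a + 1)
      (by simp [hSdef]) (by simp [hSdef]) (by simp [hSdef]) (by simp [hSdef])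
      (by simp [hSdef]) (by simp [hSdef]) _ _ _) (Set.toFinite _) (Set.toFinite _)
  -- the "outside" parts coincide
  have hTout : {d : Set (ZMod (2 * n)) | ∃ y, y ∉ S ∧ d = {y, f y} ∧ Linked f x y} =
      {d : Set (ZMod (2 * n)) | ∃ y, y ∉ S ∧ d = {y, f' y} ∧ Linked f' x y} := by
    ext d
    simp only [Set.mem_setOf_eq]
    constructor
    · rintro ⟨y, hyS, rfl, hy⟩
      refine ⟨y, hyS, by rw [hout y hyS], ?_⟩
      simpa only [Linked, hout y hyS, hfx] using hy
    · rintro ⟨y, hyS, rfl, hy⟩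
      refine ⟨y, hyS, by rw [hout y hyS], ?_⟩
      simpa only [Linked, hout y hyS, hfx] using hy
  -- parity of the "inside" parts
  have hparity :
      Even (Set.ncard ({d : Set (ZMod (2 * n)) |
        (d = {a + 1, b} ∧ Xor' ((a + 1) ∈ openArc x (f x)) (b ∈ openArc x (f x))) ∨
        (d = {b + 1, c} ∧ Xor' ((b + 1) ∈ openArc x (f x)) (c ∈ openArc x (f x))) ∨
        (d = {c + 1, a} ∧ Xor' ((c + 1) ∈ openArc x (f x)) (a ∈ openArc x (f x)))})) ↔
      Even (Set.ncard ({d : Set (ZMod (2 * n)) |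
        (d = {a, b + 1} ∧ Xor' (a ∈ openArc x (f' x)) ((b + 1) ∈ openArc x (f' x))) ∨
        (d = {b, c + 1} ∧ Xor' (b ∈ openArc x (f' x)) ((c + 1) ∈ openArc x (f' x))) ∨
        (d = {c, a + 1} ∧ Xor' (c ∈ openArc x (f' x)) ((a + 1) ∈ openArc x (f' x)))})) := by
    rw [ncard_tri _ _ _ (pair_ne' n1 n2) (pair_ne' n3 n4) (pair_ne' n5 n6),
      ncard_tri _ _ _ (pair_ne' n7 n8) (pair_ne' n9 n10) (pair_ne' n11 n12), hfx]
    exact xor6 (a ∈ openArc x (f x)) ((a + 1) ∈ openArc x (f x)) (b ∈ openArc x (f x))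
      ((b + 1) ∈ openArc x (f x)) (c ∈ openArc x (f x)) ((c + 1) ∈ openArc x (f x))
  rw [GaussEven, GaussEven, hd, hd', Nat.even_add, Nat.even_add, hTout, hparity]
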